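/- Define φ(x) = x² + x and ψ(x) = 3x - 1 on (0,1], ψ(x) = 5 - 3x on (1,2], ψ(x) = x² + x - 7 on (2,∞). Then φ is convex with φ** = φ, the largest convex minorant of ψ is ψ**(x) = -1 on (0,2] and ψ**(x) = x² + x - 7 on (2,∞), and inf_{x>0}(φ(x) - ψ(x)) = 0 ≠ 1 = inf_{x>0}(φ**(x) - ψ**(x)). -/

import Mathlib

open Filter Set Topology

/-- `φ` admits an affine minorant on `(0,∞)`. -/
def AffBdd (φ : ℝ → ℝ) : Prop := ∃ a b : ℝ, ∀ x > 0, a * x + b ≤ φ x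

/-- The biconjugate of `φ` on `(0,∞)`: the pointwise supremum of all affine
minorants of `φ` on `(0,∞)`, i.e. the largest convex minorant of `φ`. -/
noncomputable def biconj (φ : ℝ → ℝ) (x : ℝ) : ℝ :=
  sSup {y : ℝ | ∃ a b : ℝ, (∀ t > 0, a * t + b ≤ φ t) ∧ y = a * x + b}

noncomputable def phi18 (x : ℝ) : ℝ := x ^ 2 + x

noncomputable def psi18 (x : ℝ) : ℝ :=
  if x ≤ 1 then 3 * x - 1 else if x ≤ 2 then 5 - 3 * x else x ^ 2 + x - 7

lemma psi18_lo {t : ℝ} (h : t ≤ 1) : psi18 t = 3 * t - 1 := if_pos h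

lemma psi18_mid {t : ℝ} (h1 : 1 < t) (h2 : t ≤ 2) : psi18 t = 5 - 3 * t := by
  rw [psi18, if_neg (by linarith), if_pos h2]

lemma psi18_hi {t : ℝ} (h : 2 < t) : psi18 t = t ^ 2 + t - 7 := by
  rw [psi18, if_neg (by linarith), if_neg (by linarith)]

lemma neg_one_minorant : ∀ t > (0:ℝ), 0 * t + (-1) ≤ psi18 t := by
  intro t ht
  rcases le_or_gt t 1 with h | h
  · rw [psi18_lo h]; linarith
  · rcases le_or_gt t 2 with h2 | h2
    · rw [psi18_mid h h2]; linarith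
    · rw [psi18_hi h2]; nlinarith

lemma biconj_phi (x : ℝ) (hx : 0 < x) : biconj phi18 x = phi18 x := by
  apply IsGreatest.csSup_eq
  constructor
  · exact ⟨2 * x + 1, -x ^ 2, fun t ht => by simp only [phi18]; nlinarith [sq_nonneg (t - x)],
      by simp only [phi18]; ring⟩
  · rintro y ⟨a, b, hab, rfl⟩
    exact hab x hx

lemma biconj_psi_lo (x : ℝ) (hx : 0 < x) (hx2 : x ≤ 2) : biconj psi18 x = -1 := by
  apply IsGreatest.csSup_eq
  constructor
  · exact ⟨0, -1, neg_one_minorant, by ring⟩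
  · rintro y ⟨a, b, hab, rfl⟩
    have hb : b ≤ -1 := by
      have h1 : Tendsto (fun t : ℝ => a * t + b) (𝓝[>] 0) (𝓝 (a * 0 + b)) := by
        apply Tendsto.mono_left _ nhdsWithin_le_nhds
        exact (tendsto_id.const_mul a).add tendsto_const_nhds
      have h2 : Tendsto (fun t : ℝ => 3 * t - 1) (𝓝[>] (0:ℝ)) (𝓝 (3 * 0 - 1)) := by
        apply Tendsto.mono_left _ nhdsWithin_le_nhds
        exact (tendsto_id.const_mul 3).sub tendsto_const_nhds
      have hle : b ≤ 3 * 0 - 1 := by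
        have : a * 0 + b ≤ 3 * 0 - 1 := by
          refine le_of_tendsto_of_tendsto h1 h2 ?_
          filter_upwards [Ioo_mem_nhdsGT_of_mem (by norm_num : (0:ℝ) ∈ Ico 0 1)] with t ht
          have := hab t ht.1
          rwa [psi18_lo ht.2.le] at this
        linarith
      linarith
    have h2 : 2 * a + b ≤ -1 := by
      have := hab 2 (by norm_num)
      rw [psi18_mid (by norm_num) le_rfl] at this
      linarith
    nlinarith [mul_nonneg (by linarith : (0:ℝ) ≤ 2 - x) (by linarith : (0:ℝ) ≤ -1 - b),
      mul_nonneg hx.le (by linarith : (0:ℝ) ≤ -1 - (2 * a + b))]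

lemma biconj_psi_hi (x : ℝ) (hx : 2 < x) : biconj psi18 x = x ^ 2 + x - 7 := by
  apply IsGreatest.csSup_eq
  constructor
  · refine ⟨2 * x + 1, -x ^ 2 - 7, fun t ht => ?_, by ring⟩
    rcases le_or_gt t 1 with h | h
    · rw [psi18_lo h]
      nlinarith [mul_nonneg (by linarith : (0:ℝ) ≤ 2 * x - 2) (by linarith : (0:ℝ) ≤ 1 - t),
        sq_nonneg (x - 1)]
    · rcases le_or_gt t 2 with h2 | h2
      · rw [psi18_mid h h2]
        nlinarith [mul_nonneg (by linarith : (0:ℝ) ≤ 2 * x + 4) (by linarith : (0:ℝ) ≤ 2 - t),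
          sq_nonneg (x - 2)]
      · rw [psi18_hi h2]; nlinarith [sq_nonneg (t - x)]
  · rintro y ⟨a, b, hab, rfl⟩
    have := hab x (by linarith)
    rwa [psi18_hi hx] at this

lemma inf1 :
    (⨅ x : Set.Ioi (0:ℝ), ((phi18 x.1 - psi18 x.1 : ℝ) : EReal)) = (0 : EReal) := by
  apply le_antisymm
  · have h := iInf_le (fun x : Set.Ioi (0:ℝ) => ((phi18 x.1 - psi18 x.1 : ℝ) : EReal))
      ⟨1, by norm_num⟩
    have : phi18 1 - psi18 1 = 0 := by rw [psi18_lo le_rfl]; simp [phi18]; ring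
    rwa [this, EReal.coe_zero] at h
  · refine le_iInf fun x => ?_
    have hx : (0:ℝ) < x.1 := x.2
    have hnn : (0:ℝ) ≤ phi18 x.1 - psi18 x.1 := by
      rcases le_or_gt x.1 1 with h | h
      · rw [psi18_lo h]; simp only [phi18]; nlinarith [sq_nonneg (x.1 - 1)]
      · rcases le_or_gt x.1 2 with h2 | h2
        · rw [psi18_mid h h2]; simp only [phi18]; nlinarith
        · rw [psi18_hi h2]; simp only [phi18]; linarith
    exact_mod_cast EReal.coe_nonneg.mpr hnn

lemma inf2 :
    (⨅ x : Set.Ioi (0:ℝ),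
        ((biconj phi18 x.1 - biconj psi18 x.1 : ℝ) : EReal)) = (1 : EReal) := by
  apply le_antisymm
  · by_contra h
    push_neg at h
    obtain ⟨q, hq1, hq2⟩ := EReal.exists_rat_btwn_of_lt h
    have hr : (1:ℝ) < (q:ℝ) := by exact_mod_cast hq1
    set x0 : ℝ := min 1 (((q:ℝ) - 1) / 3) with hx0def
    have hx0 : 0 < x0 := lt_min one_pos (by linarith)
    have hx01 : x0 ≤ 1 := min_le_left _ _
    have hx03 : x0 ≤ ((q:ℝ) - 1) / 3 := min_le_right _ _
    have hval : biconj phi18 x0 - biconj psi18 x0 = x0 ^ 2 + x0 + 1 := by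
      rw [biconj_phi x0 hx0, biconj_psi_lo x0 hx0 (by linarith), phi18]; ring
    have hlt : x0 ^ 2 + x0 + 1 < (q:ℝ) := by
      nlinarith [mul_nonneg hx0.le (by linarith : (0:ℝ) ≤ 1 - x0)]
    have h1 : (⨅ x : Set.Ioi (0:ℝ),
        ((biconj phi18 x.1 - biconj psi18 x.1 : ℝ) : EReal)) ≤
        ((biconj phi18 x0 - biconj psi18 x0 : ℝ) : EReal) :=
      iInf_le _ (⟨x0, hx0⟩ : Set.Ioi (0:ℝ))
    rw [hval] at h1
    have h2 : ((x0 ^ 2 + x0 + 1 : ℝ) : EReal) < ((q:ℝ) : EReal) :=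
      EReal.coe_lt_coe_iff.mpr hlt
    have := lt_of_le_of_lt h1 (h2.trans_le (by exact_mod_cast hq2.le))
    exact lt_irrefl _ this
  · refine le_iInf fun x => ?_
    have hx : (0:ℝ) < x.1 := x.2
    have : (1:ℝ) ≤ biconj phi18 x.1 - biconj psi18 x.1 := by
      rcases le_or_gt x.1 2 with h2 | h2
      · rw [biconj_phi x.1 hx, biconj_psi_lo x.1 hx h2, phi18]; nlinarith
      · rw [biconj_phi x.1 hx, biconj_psi_hi x.1 h2, phi18]; linarith
    calc (1 : EReal) = ((1:ℝ) : EReal) := by norm_cast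
      _ ≤ _ := EReal.coe_le_coe_iff.mpr this

theorem stmt_18 :
    ConvexOn ℝ (Set.Ioi (0:ℝ)) phi18 ∧
    (∀ x > 0, biconj phi18 x = phi18 x) ∧
    (∀ x, 0 < x → x ≤ 2 → biconj psi18 x = -1) ∧
    (∀ x > 2, biconj psi18 x = x ^ 2 + x - 7) ∧
    (⨅ x : Set.Ioi (0:ℝ), ((phi18 x.1 - psi18 x.1 : ℝ) : EReal)) = (0 : EReal) ∧
    (⨅ x : Set.Ioi (0:ℝ),
        ((biconj phi18 x.1 - biconj psi18 x.1 : ℝ) : EReal)) = (1 : EReal) := by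
  refine ⟨?_, biconj_phi, biconj_psi_lo, biconj_psi_hi, inf1, inf2⟩
  have h1 : ConvexOn ℝ (Set.Ioi (0:ℝ)) (fun x : ℝ => x ^ 2) :=
    (Even.convexOn_pow even_two).subset (Set.subset_univ _) (convex_Ioi 0)
  have h2 : ConvexOn ℝ (Set.Ioi (0:ℝ)) (fun x : ℝ => x) := convexOn_id (convex_Ioi 0)
  exact h1.add h2
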